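/- Let Ā ∈ M_{r×(n+1)}(ℤ) and let V ∈ M_{n+1}(ℤ) be unimodular with ĀV = [I_r | 0]; write V = [V_𝔞 | V_𝔟] and W = V⁻¹ = [W_𝔞 ; W_𝔟]. Let F̄ = (F̄_0,…,F̄_n) with F̄_0 ≡ 1 and each F̄_i a T_Ā-invariant rational function of (z_0,…,z_n). Let I be an open interval with 0 ∉ I and suppose x : I → (ℝ∖{0})^r and y : I → (ℝ∖{0})^{n+1−r} are differentiable and satisfy, for all t ∈ I, dy_j/dt = (y_j(t)/t)·Σ_i F̄_i(y(t)^{W_𝔟})·(V_𝔟)_{i,j} and dx_k/dt = (x_k(t)/t)·Σ_i F̄_i(y(t)^{W_𝔟})·(V_𝔞)_{i,k}. Define z̄(t) := (x(t), y(t))^W, i.e. z̄_i(t) = ∏_k x_k(t)^{(W_𝔞)_{k,i}} · ∏_l y_l(t)^{(W_𝔟)_{l,i}} for i = 0,…,n. Then there exists c ∈ ℝ∖{0} such that z̄_0(t) = c·t for all t ∈ I, and the curve Z(t) := (z̄_1(t/c),…,z̄_n(t/c)), defined for t ∈ c·I, satisfies dZ_i/dt = (Z_i(t)/t)·F̄_i(t,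 Z(t)) for all t ∈ c·I and all i ≥ 1. -/

import Mathlib

noncomputable def mpow {ι κ : Type*} [Fintype ι] (x : ι → ℝ) (A : Matrix ι κ ℤ) : κ → ℝ :=
  fun j => ∏ i, x i ^ A i j

lemma hasDerivAt_mpow_apply {ι : Type*} [Fintype ι] [DecidableEq ι]
    (h : ℝ → ι → ℝ) (t : ℝ) (d : ι → ℝ)
    (hd : ∀ k, HasDerivAt (fun s => h s k) (d k) t)
    (hnz : ∀ k, h t k ≠ 0) {κ : Type*} (A : Matrix ι κ ℤ) (j : κ) :
    HasDerivAt (fun s => mpow (h s) A j)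
      (mpow (h t) A j * ∑ k, (A k j : ℝ) * (d k / h t k)) t := by
  have key : ∀ k : ι, HasDerivAt (fun s => h s k ^ A k j)
      ((A k j : ℝ) * h t k ^ (A k j - 1) * d k) t :=
    fun k => by
      have := (hasDerivAt_zpow (A k j) (h t k) (Or.inl (hnz k))).comp t (hd k)
      exact this
  have H := HasDerivAt.fun_finsetProd (u := Finset.univ) (x := t)
    (f := fun k s => h s k ^ A k j)
    (f' := fun k => (A k j : ℝ) * h t k ^ (A k j - 1) * d k) (fun k _ => key k)
  refine H.congr_deriv (Eq.symm ?_)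
  rw [mpow, Finset.mul_sum]
  refine Finset.sum_congr rfl fun k _ => ?_
  rw [smul_eq_mul, ← Finset.prod_erase_mul Finset.univ _ (Finset.mem_univ k)]
  simp only [zpow_sub_one₀ (hnz k)]
  field_simp

theorem recovered_solution (n r p : ℕ) (hn : n + 1 = r + p)
    (Abar : Matrix (Fin r) (Fin (n + 1)) ℤ)
    (V : Matrix (Fin (n + 1)) (Fin r ⊕ Fin p) ℤ)
    (W : Matrix (Fin r ⊕ Fin p) (Fin (n + 1)) ℤ)
    (hVW : V * W = 1) (hWV : W * V = 1)
    (hAV : Abar * V = Matrix.fromCols 1 0)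
    (F : Fin n → (Fin (n + 1) → ℝ) → ℝ)
    (hinv : ∀ (i : Fin n) (lam : Fin r → ℝ), (∀ k, lam k ≠ 0) →
      ∀ zz : Fin (n + 1) → ℝ, (∀ l, zz l ≠ 0) →
        F i (fun l => mpow lam Abar l * zz l) = F i zz)
    (I : Set ℝ) (hIopen : IsOpen I) (hIconv : Convex ℝ I) (h0I : (0 : ℝ) ∉ I)
    (x : ℝ → Fin r → ℝ) (y : ℝ → Fin p → ℝ)
    (hxnz : ∀ t ∈ I, ∀ k, x t k ≠ 0) (hynz : ∀ t ∈ I, ∀ j, y t j ≠ 0)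
    (hodey : ∀ t ∈ I, ∀ j : Fin p,
      HasDerivAt (fun s => y s j)
        ((y t j / t) *
          ∑ i : Fin (n + 1),
            (Fin.cons (fun _ => (1 : ℝ)) F : Fin (n + 1) → (Fin (n + 1) → ℝ) → ℝ) i
                (mpow (y t) (W.submatrix Sum.inr id)) *
              (V i (Sum.inr j) : ℝ)) t)
    (hodex : ∀ t ∈ I, ∀ k : Fin r,
      HasDerivAt (fun s => x s k)
        ((x t k / t) *
          ∑ i : Fin (n + 1),
            (Fin.cons (fun _ => (1 : ℝ)) F : Fin (n + 1) → (Fin (n + 1) → ℝ) → ℝ) i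
                (mpow (y t) (W.submatrix Sum.inr id)) *
              (V i (Sum.inl k) : ℝ)) t) :
    ∃ c : ℝ, c ≠ 0 ∧ (∀ t ∈ I, mpow (Sum.elim (x t) (y t)) W 0 = c * t) ∧
      ∀ t : ℝ, t / c ∈ I → ∀ i : Fin n,
        HasDerivAt (fun s => mpow (Sum.elim (x (s / c)) (y (s / c))) W i.succ)
          ((mpow (Sum.elim (x (t / c)) (y (t / c))) W i.succ / t) *
            F i (Fin.cons t (fun j => mpow (Sum.elim (x (t / c)) (y (t / c))) W j.succ))) t := by
  classical
  -- notation
  set Fbar : Fin (n + 1) → (Fin (n + 1) → ℝ) → ℝ := Fin.cons (fun _ => (1 : ℝ)) F with hFbar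
  set G : ℝ → Fin (n + 1) → ℝ :=
    fun t i => Fbar i (mpow (y t) (W.submatrix Sum.inr id)) with hG
  set z : ℝ → Fin (n + 1) → ℝ := fun t => mpow (Sum.elim (x t) (y t)) W with hzdef
  have htne : ∀ t ∈ I, (t : ℝ) ≠ 0 := fun t ht h => h0I (h ▸ ht)
  have helimnz : ∀ t ∈ I, ∀ s : Fin r ⊕ Fin p, Sum.elim (x t) (y t) s ≠ 0 := by
    intro t ht s
    cases s with
    | inl k => exact hxnz t ht k
    | inr j => exact hynz t ht j
  have hznz : ∀ t ∈ I, ∀ l, z t l ≠ 0 := by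
    intro t ht l
    exact Finset.prod_ne_zero_iff.mpr fun s _ => zpow_ne_zero _ (helimnz t ht s)
  -- Abar is the top part of W
  have hAbar : ∀ k l, Abar k l = W (Sum.inl k) l := by
    intro k l
    have : Abar * (V * W) = Matrix.fromCols (1 : Matrix (Fin r) (Fin r) ℤ) (0 : Matrix (Fin r) (Fin p) ℤ) * W := by rw [← Matrix.mul_assoc, hAV]
    rw [hVW, Matrix.mul_one] at this
    calc Abar k l = (Matrix.fromCols (1 : Matrix (Fin r) (Fin r) ℤ) (0 : Matrix (Fin r) (Fin p) ℤ) * W) k l := by rw [← this]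
      _ = W (Sum.inl k) l := by
          rw [Matrix.mul_apply, Fintype.sum_sum_type]
          simp [Matrix.fromCols, Matrix.one_apply]
  -- invariance rewritten
  have hFz : ∀ t ∈ I, ∀ i : Fin n, F i (z t) = F i (mpow (y t) (W.submatrix Sum.inr id)) := by
    intro t ht i
    have hsplit : z t = fun l => mpow (x t) Abar l * mpow (y t) (W.submatrix Sum.inr id) l := by
      funext l
      rw [hzdef]
      simp only [mpow, Fintype.prod_sum_type, Sum.elim_inl, Sum.elim_inr, Matrix.submatrix_apply,
        id_eq]
      congr 1
      exact Finset.prod_congr rfl fun k _ => by rw [hAbar k l]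
    rw [hsplit]
    exact hinv i (x t) (hxnz t ht) _ (fun l =>
      Finset.prod_ne_zero_iff.mpr fun j _ => zpow_ne_zero _ (hynz t ht j))
  -- the key derivative computation for every component of z
  have hz : ∀ t ∈ I, ∀ l : Fin (n + 1),
      HasDerivAt (fun s => z s l) (z t l / t * G t l) t := by
    intro t ht l
    have hd : ∀ s : Fin r ⊕ Fin p,
        HasDerivAt (fun u => Sum.elim (x u) (y u) s)
          (Sum.elim (x t) (y t) s / t * ∑ i : Fin (n + 1), G t i * (V i s : ℝ)) t := by
      intro s
      cases s with
      | inl k => exact hodex t ht k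
      | inr j => exact hodey t ht j
    have H := hasDerivAt_mpow_apply (fun u => Sum.elim (x u) (y u)) t
      (fun s => Sum.elim (x t) (y t) s / t * ∑ i : Fin (n + 1), G t i * (V i s : ℝ))
      hd (helimnz t ht) W l
    refine H.congr_deriv (Eq.symm ?_)
    have hterm : ∀ s : Fin r ⊕ Fin p,
        (Sum.elim (x t) (y t) s / t * ∑ i : Fin (n + 1), G t i * (V i s : ℝ)) /
          Sum.elim (x t) (y t) s = (∑ i : Fin (n + 1), G t i * (V i s : ℝ)) / t := by
      intro s
      field_simp
      rw [mul_div_mul_left _ _ (helimnz t ht s)]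
    have hsum : (∑ s : Fin r ⊕ Fin p, (W s l : ℝ) *
        ((Sum.elim (x t) (y t) s / t * ∑ i : Fin (n + 1), G t i * (V i s : ℝ)) /
          Sum.elim (x t) (y t) s)) = G t l / t := by
      simp only [hterm]
      have : (∑ s : Fin r ⊕ Fin p, (W s l : ℝ) *
          ((∑ i : Fin (n + 1), G t i * (V i s : ℝ)) / t)) =
          (∑ i : Fin (n + 1), G t i * (∑ s : Fin r ⊕ Fin p, (V i s : ℝ) * (W s l : ℝ))) / t := by
        simp only [div_eq_mul_inv, Finset.sum_mul, Finset.mul_sum]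
        rw [Finset.sum_comm]
        exact Finset.sum_congr rfl fun i _ => Finset.sum_congr rfl fun s _ => by ring
      rw [this]
      congr 1
      have hVWc : ∀ i : Fin (n + 1), (∑ s : Fin r ⊕ Fin p, (V i s : ℝ) * (W s l : ℝ)) =
          if i = l then (1 : ℝ) else 0 := by
        intro i
        have h2 := congrArg (fun M => M i l) hVW
        simp only [Matrix.mul_apply, Matrix.one_apply] at h2
        rw [show ((if i = l then (1:ℝ) else 0)) = ((if i = l then (1:ℤ) else 0 : ℤ) : ℝ) by
          split <;> simp]
        exact_mod_cast h2
      simp only [hVWc, mul_ite, mul_one, mul_zero, Finset.sum_ite_eq', Finset.mem_univ, if_true]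
    rw [hsum]
    ring
  -- z 0 has derivative z 0 / t
  have hz0 : ∀ t ∈ I, HasDerivAt (fun s => z s 0) (z t 0 / t) t := by
    intro t ht
    have := hz t ht 0
    simpa [hG, hFbar, Fin.cons_zero] using this
  rcases Set.eq_empty_or_nonempty I with hIe | ⟨t0, ht0⟩
  · exact ⟨1, one_ne_zero, fun t ht => absurd ht (hIe ▸ Set.notMem_empty t),
      fun t ht i => absurd ht (hIe ▸ Set.notMem_empty _)⟩
  obtain ⟨c, hcdef⟩ : ∃ c : ℝ, c = z t0 0 / t0 := ⟨_, rfl⟩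
  have hcne : c ≠ 0 := hcdef ▸ div_ne_zero (hznz t0 ht0 0) (htne t0 ht0)
  -- constancy of z 0 / t
  have hg : ∀ t ∈ I, HasDerivAt (fun s => z s 0 / s) 0 t := by
    intro t ht
    have := (hz0 t ht).div (hasDerivAt_id t) (htne t ht)
    refine this.congr_deriv (Eq.symm ?_)
    simp only [id_eq, mul_one]
    rw [div_mul_cancel₀ _ (htne t ht), sub_self, zero_div]
  have hconst : ∀ t ∈ I, z t 0 / t = c := by
    rw [hcdef]
    intro t ht
    have hdiff : DifferentiableOn ℝ (fun s => z s 0 / s) I :=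
      fun s hs => ((hg s hs).differentiableAt).differentiableWithinAt
    have hfd : ∀ s ∈ I, fderivWithin ℝ (fun u => z u 0 / u) I s = 0 := by
      intro s hs
      rw [fderivWithin_of_isOpen hIopen hs]
      ext u
      rw [fderiv_apply_one_eq_deriv, (hg s hs).deriv]
      simp
    exact hIconv.is_const_of_fderivWithin_eq_zero hdiff hfd ht ht0
  have hz0eq : ∀ t ∈ I, z t 0 = c * t := by
    intro t ht
    have h3 := hconst t ht
    rw [div_eq_iff (htne t ht)] at h3
    exact h3
  refine ⟨c, hcne, hz0eq, ?_⟩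
  intro t ht i
  have htne' : t ≠ 0 := by
    intro h
    rw [h, zero_div] at ht
    exact h0I ht
  have htc : t / c * c = t := div_mul_cancel₀ t hcne
  -- the vector identity
  have hvec : (Fin.cons t (fun j => z (t / c) j.succ) : Fin (n + 1) → ℝ) = z (t / c) := by
    funext l
    refine Fin.cases ?_ (fun j => ?_) l
    · rw [Fin.cons_zero, hz0eq (t / c) ht, mul_comm, htc]
    · rw [Fin.cons_succ]
  have hD := hz (t / c) ht i.succ
  have hcomp := hD.comp t ((hasDerivAt_id t).div_const c)
  refine hcomp.congr_deriv (Eq.symm ?_)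
  have hGsucc : G (t / c) i.succ = F i (z (t / c)) := by
    rw [hG, hFbar]
    simp only [Fin.cons_succ]
    exact (hFz (t / c) ht i).symm
  rw [hvec, ← hGsucc]
  have hm : mpow (Sum.elim (x (t / c)) (y (t / c))) W i.succ = z (t / c) i.succ := rfl
  rw [hm]
  rw [div_div_eq_mul_div]
  field_simp
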